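/- Let J_t = e^{t(P−I)} be the continuous-time semigroup of an irreducible Markov chain on a finite state space V with transition matrix P satisfying 1 − P(x,x) ∈ [p/2, 2e²p] for all x ∈ V, where p ∈ (0,1). Then there exists a universal constant δ₀ ∈ (0,1) (independent of p and V) such that for s = 1/p and all x, y ∈ V, J_s(x,y) ≤ 1 − δ₀. -/

import Mathlib

noncomputable section

namespace Stmt19Helper

open NormedSpace

section WithNorm

attribute [local instance] Matrix.linftyOpSemiNormedRing Matrix.linftyOpNormedRing
  Matrix.linftyOpNormedAlgebra

variable {V : Type} [Fintype V] [DecidableEq V]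

lemma exp_entry_hasSum (M : Matrix V V ℝ) (x y : V) :
    HasSum (fun n : ℕ => (n.factorial : ℝ)⁻¹ * (M ^ n) x y) (exp M x y) := by
  have h : HasSum (fun n : ℕ => ((n.factorial : ℝ))⁻¹ • M ^ n) (exp M) :=
    exp_series_hasSum_exp' M
  have h2 := (Pi.hasSum.1 ((Pi.hasSum).1 h x) y)
  simpa [Matrix.smul_apply] using h2

lemma pow_entry_nonneg {P : Matrix V V ℝ} (hP : ∀ x y, 0 ≤ P x y) (n : ℕ) (x y : V) :
    0 ≤ (P ^ n) x y := by
  induction n generalizing x y with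
  | zero => simp [Matrix.one_apply]; positivity
  | succ n ih =>
    rw [pow_succ, Matrix.mul_apply]
    exact Finset.sum_nonneg fun z _ => mul_nonneg (ih x z) (hP z y)

lemma pow_diag_ge {P : Matrix V V ℝ} (hP : ∀ x y, 0 ≤ P x y) (n : ℕ) (x : V) :
    P x x ^ n ≤ (P ^ n) x x := by
  induction n with
  | zero => simp
  | succ n ih =>
    rw [pow_succ, pow_succ, Matrix.mul_apply]
    calc P x x ^ n * P x x ≤ (P ^ n) x x * P x x :=
          mul_le_mul_of_nonneg_right ih (hP x x)
      _ ≤ ∑ z, (P ^ n) x z * P z x := by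
          refine Finset.single_le_sum (f := fun z => (P ^ n) x z * P z x) ?_ (Finset.mem_univ x)
          exact fun z _ => mul_nonneg (pow_entry_nonneg hP n x z) (hP z x)

lemma exp_factor (P : Matrix V V ℝ) (t : ℝ) :
    exp (t • (P - 1)) = Real.exp (-t) • exp (t • P) := by
  have h1 : t • (P - 1) = (-t) • (1 : Matrix V V ℝ) + t • P := by
    rw [smul_sub]; module
  rw [h1]; refine (exp_add_of_commute (((Commute.one_left (t • P)).smul_left (-t)))).trans ?_
  have h2 : ((-t) • (1 : Matrix V V ℝ)) = algebraMap ℝ (Matrix V V ℝ) (-t) := by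
    rw [Algebra.algebraMap_eq_smul_one]
  rw [h2, ← algebraMap_exp_comm, Algebra.algebraMap_eq_smul_one, smul_mul_assoc, one_mul,
    ← Real.exp_eq_exp_ℝ]
  rfl

lemma J_nonneg {P : Matrix V V ℝ} (hP : ∀ x y, 0 ≤ P x y) {t : ℝ} (ht : 0 ≤ t) (x y : V) :
    0 ≤ exp (t • (P - 1)) x y := by
  rw [exp_factor, Matrix.smul_apply, smul_eq_mul]
  refine mul_nonneg (Real.exp_nonneg _) ?_
  refine (exp_entry_hasSum (t • P) x y).nonneg fun n => ?_
  rw [smul_pow, Matrix.smul_apply, smul_eq_mul]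
  have := pow_entry_nonneg hP n x y
  positivity

lemma J_rowsum {P : Matrix V V ℝ} (hrow : ∀ x, ∑ y, P x y = 1) (t : ℝ) (x : V) :
    ∑ y, exp (t • (P - 1)) x y = 1 := by
  set A : Matrix V V ℝ := t • (P - 1) with hA
  have hArow : ∀ z, ∑ y, A z y = 0 := by
    intro z
    simp only [hA, Matrix.smul_apply, Matrix.sub_apply, smul_eq_mul, mul_sub,
      Finset.sum_sub_distrib, ← Finset.mul_sum, hrow z]
    simp [Matrix.one_apply]
  have hpow : ∀ n : ℕ, ∀ z : V, ∑ y, (A ^ (n+1)) z y = 0 := by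
    intro n z
    rw [pow_succ]
    simp only [Matrix.mul_apply]
    rw [Finset.sum_comm]
    simp only [← Finset.mul_sum]
    simp [hArow]
  have h1 : HasSum (fun n : ℕ => ∑ y, (n.factorial : ℝ)⁻¹ * (A ^ n) x y)
      (∑ y, exp A x y) :=
    hasSum_sum fun y _ => exp_entry_hasSum A x y
  have h2 : (fun n : ℕ => ∑ y, (n.factorial : ℝ)⁻¹ * (A ^ n) x y)
      = fun n => if n = 0 then (1:ℝ) else 0 := by
    funext n
    cases n with
    | zero => simp [Matrix.one_apply]
    | succ n =>
      rw [← Finset.mul_sum, hpow n x]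
      simp
  rw [h2] at h1
  exact h1.unique (hasSum_ite_eq 0 1)

lemma J_diag_lower {P : Matrix V V ℝ} (hP : ∀ x y, 0 ≤ P x y) {t : ℝ} (ht : 0 ≤ t) (x : V) :
    Real.exp (-(t * (1 - P x x))) ≤ exp (t • (P - 1)) x x := by
  rw [exp_factor, Matrix.smul_apply, smul_eq_mul]
  have key : Real.exp (t * P x x) ≤ exp (t • P) x x := by
    have hr : HasSum (fun n : ℕ => (n.factorial : ℝ)⁻¹ * (t * P x x) ^ n)
        (Real.exp (t * P x x)) := by
      rw [Real.exp_eq_exp_ℝ]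
      simpa [smul_eq_mul] using exp_series_hasSum_exp' (𝕂 := ℝ) (t * P x x)
    refine hasSum_le (fun n => ?_) hr (exp_entry_hasSum (t • P) x x)
    rw [smul_pow, Matrix.smul_apply, smul_eq_mul, mul_pow]
    have h3 := pow_diag_ge hP n x
    have h4 : (0:ℝ) ≤ t ^ n := pow_nonneg ht n
    have h5 : (0:ℝ) ≤ (n.factorial : ℝ)⁻¹ := by positivity
    gcongr
  calc Real.exp (-(t * (1 - P x x))) = Real.exp (-t) * Real.exp (t * P x x) := by
        rw [← Real.exp_add]; ring_nf
    _ ≤ Real.exp (-t) * exp (t • P) x x :=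
        mul_le_mul_of_nonneg_left key (Real.exp_nonneg _)

def entryCLM (x y : V) : Matrix V V ℝ →L[ℝ] ℝ :=
  { toLinearMap := Matrix.entryLinearMap ℝ ℝ x y
    cont := LinearMap.continuous_of_finiteDimensional _ }

lemma J_entry_hasDerivAt (A : Matrix V V ℝ) (x y : V) (t : ℝ) :
    HasDerivAt (fun u : ℝ => exp (u • A) x y) ((exp (t • A) * A) x y) t := by
  have h : HasDerivAt (fun u : ℝ => exp (u • A)) (exp (t • A) * A) t :=
    hasDerivAt_exp_smul_const A t
  exact ((entryCLM x y).hasFDerivAt.comp_hasDerivAt t h : )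

lemma J_diag_upper {P : Matrix V V ℝ} (hP : ∀ x y, 0 ≤ P x y) (hrow : ∀ x, ∑ y, P x y = 1)
    {b s : ℝ} (hb : 0 < b) (hs : 0 < s)
    (hbz : ∀ z x : V, z ≠ x → P z x ≤ b) (x : V) (hq : 0 ≤ 1 - P x x) :
    exp (s • (P - 1)) x x ≤ b / (1 - P x x + b)
      + ((1 - P x x) / (1 - P x x + b)) * Real.exp (-((1 - P x x + b) * s)) := by
  set q : ℝ := 1 - P x x with hqdef
  set A : Matrix V V ℝ := P - 1 with hAdef
  set f : ℝ → ℝ := fun t => exp (t • A) x x with hfdef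
  have hqb : 0 < q + b := by linarith
  set c : ℝ := b / (q + b) with hcdef
  have hcb : (q + b) * c = b := by rw [hcdef]; field_simp
  set g : ℝ → ℝ := fun t => Real.exp ((q + b) * t) * (f t - c) with hgdef
  have hfd : ∀ t : ℝ, HasDerivAt f ((exp (t • A) * A) x x) t :=
    fun t => J_entry_hasDerivAt A x x t
  have hgd : ∀ t : ℝ, HasDerivAt g
      (Real.exp ((q + b) * t) * (q + b) * (f t - c)
        + Real.exp ((q + b) * t) * ((exp (t • A) * A) x x)) t := by
    intro t
    have h1 : HasDerivAt (fun u : ℝ => (q + b) * u) (q + b) t := by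
      simpa using (hasDerivAt_id t).const_mul (q + b)
    exact (h1.exp).mul ((hfd t).sub_const c)
  have hderiv_le : ∀ t ∈ Set.Ioo (0:ℝ) s, deriv g t ≤ 0 := by
    intro t ht
    have ht0 : (0:ℝ) ≤ t := le_of_lt ht.1
    have hfb : (exp (t • A) * A) x x ≤ -(q + b) * f t + b := by
      rw [Matrix.mul_apply]
      have hsum : ∑ z, exp (t • A) x z * A z x
          = (∑ z, exp (t • A) x z * P z x) - f t := by
        simp only [hAdef, Matrix.sub_apply, mul_sub, Finset.sum_sub_distrib]
        congr 1
        rw [Finset.sum_eq_single x]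
        · simp [Matrix.one_apply, hfdef, hAdef]
        · intro z _ hz; simp [Matrix.one_apply, hz]
        · simp
      rw [hsum]
      have hsplit : ∑ z, exp (t • A) x z * P z x
          = f t * P x x + ∑ z ∈ Finset.univ.erase x, exp (t • A) x z * P z x := by
        rw [← Finset.add_sum_erase _ _ (Finset.mem_univ x)]
      have hithbd : ∑ z ∈ Finset.univ.erase x, exp (t • A) x z * P z x
          ≤ b * (1 - f t) := by
        have h2 : ∑ z ∈ Finset.univ.erase x, exp (t • A) x z * P z x
            ≤ ∑ z ∈ Finset.univ.erase x, exp (t • A) x z * b := by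
          refine Finset.sum_le_sum fun z hz => ?_
          have hzx : z ≠ x := Finset.ne_of_mem_erase hz
          exact mul_le_mul_of_nonneg_left (hbz z x hzx) (J_nonneg hP ht0 x z)
        have h3 : ∑ z ∈ Finset.univ.erase x, exp (t • A) x z
            = 1 - f t := by
          have := J_rowsum hrow t x
          rw [← Finset.add_sum_erase _ _ (Finset.mem_univ x)] at this
          simp only [hfdef]
          linarith [this]
        rw [← Finset.sum_mul] at h2
        rw [h3] at h2
        linarith [h2]
      have hPxx : P x x = 1 - q := by rw [hqdef]; ring
      have hf1 : f t ≤ 1 := by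
        have h4 := J_rowsum hrow t x
        have h5 : f t ≤ ∑ y, exp (t • A) x y :=
          Finset.single_le_sum (fun y _ => J_nonneg hP ht0 x y) (Finset.mem_univ x)
        linarith
      nlinarith [hsplit, hithbd]
    rw [(hgd t).deriv]
    have he : (0:ℝ) < Real.exp ((q + b) * t) := Real.exp_pos _
    nlinarith [hfb, he]
  have hg_anti : AntitoneOn g (Set.Icc 0 s) := by
    refine antitoneOn_of_deriv_nonpos (convex_Icc 0 s) ?_ ?_ ?_
    · exact (Differentiable.continuous fun t => (hgd t).differentiableAt).continuousOn
    · intro t ht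
      exact ((hgd t).differentiableAt).differentiableWithinAt
    · intro t ht
      rw [interior_Icc] at ht
      exact hderiv_le t ht
  have hgs : g s ≤ g 0 :=
    hg_anti (Set.left_mem_Icc.2 hs.le) (Set.right_mem_Icc.2 hs.le) hs.le
  have hf0 : f 0 = 1 := by
    simp only [hfdef, zero_smul, exp_zero, Matrix.one_apply_eq]
  have hg0 : g 0 = 1 - c := by simp [hgdef, hf0]
  have hgs' : Real.exp ((q + b) * s) * (f s - c) ≤ 1 - c := by
    rw [← hg0]; exact hgs
  have hepos : (0:ℝ) < Real.exp ((q + b) * s) := Real.exp_pos _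
  have hexp_inv : Real.exp (-((q + b) * s)) = (Real.exp ((q + b) * s))⁻¹ := by
    rw [Real.exp_neg]
  have h1c : 1 - c = q / (q + b) := by
    rw [hcdef, eq_div_iff hqb.ne', sub_mul, div_mul_cancel₀ b hqb.ne']; ring
  have h6 : f s - c ≤ (1 - c) / Real.exp ((q + b) * s) := by
    rw [le_div_iff₀ hepos, mul_comm]; exact hgs'
  have : f s ≤ c + (1 - c) * Real.exp (-((q + b) * s)) := by
    rw [hexp_inv, ← div_eq_mul_inv]
    linarith
  rw [h1c] at this
  exact this

end WithNorm

end Stmt19Helper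

open Stmt19Helper in
/-- Lemma 6.4. There is a universal constant `δ₀ ∈ (0,1)` such that for every
finite state space `V`, every irreducible transition matrix `P` with holding probabilities
satisfying `1 − P(x,x) ∈ [p/2, 2e²p]` for all `x` (as for the auxiliary chain with parameters
`μ = 1, p`), the continuous-time semigroup `J_t = e^{t(P−I)}` satisfies
`J_s(x,y) ≤ 1 − δ₀` for `s = 1/p` and all `x, y`. -/
theorem stmt19 :
    ∃ δ₀ : ℝ, 0 < δ₀ ∧ δ₀ < 1 ∧
      ∀ (V : Type) (_ : Fintype V) (_ : DecidableEq V) (_ : Nonempty V)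
        (P : Matrix V V ℝ) (p : ℝ),
        0 < p → p < 1 →
        (∀ x y, 0 ≤ P x y) → (∀ x, ∑ y, P x y = 1) →
        (∀ x y, ∃ n : ℕ, 0 < (P ^ n) x y) →
        (∀ x : V, p / 2 ≤ 1 - P x x ∧ 1 - P x x ≤ 2 * Real.exp 1 ^ 2 * p) →
        ∀ x y : V,
          NormedSpace.exp ((1 / p) • (P - 1)) x y ≤ 1 - δ₀ := by
  classical
  set e2 : ℝ := Real.exp 1 ^ 2 with he2
  have he2pos : (0:ℝ) < e2 := by positivity
  have hhalf : Real.exp (-(1/2 : ℝ)) < 1 := by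
    rw [Real.exp_lt_one_iff]; norm_num
  refine ⟨min (Real.exp (-(2 * e2))) ((1 - Real.exp (-(1/2 : ℝ))) / (1 + 4 * e2)), ?_, ?_, ?_⟩
  · refine lt_min (Real.exp_pos _) ?_
    have : (0:ℝ) < 1 + 4 * e2 := by positivity
    apply div_pos (by linarith) this
  · calc min (Real.exp (-(2 * e2))) ((1 - Real.exp (-(1/2 : ℝ))) / (1 + 4 * e2))
        ≤ Real.exp (-(2 * e2)) := min_le_left _ _
      _ < 1 := by rw [Real.exp_lt_one_iff]; nlinarith [he2pos]
  · intro V _ _ _ P p hp hp1 hP hrow _ hhold x y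
    have hs : (0:ℝ) < 1 / p := by positivity
    set s : ℝ := 1 / p with hsdef
    -- bound on off-diagonal entries of P
    have hbz : ∀ z w : V, z ≠ w → P z w ≤ 2 * e2 * p := by
      intro z w hzw
      have h1 : P z w ≤ ∑ y ∈ Finset.univ.erase z, P z y := by
        refine Finset.single_le_sum (fun y _ => hP z y) ?_
        exact Finset.mem_erase.2 ⟨Ne.symm hzw, Finset.mem_univ w⟩
      have h2 : ∑ y ∈ Finset.univ.erase z, P z y = 1 - P z z := by
        have := hrow z
        rw [← Finset.add_sum_erase _ _ (Finset.mem_univ z)] at this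
        linarith
      have h3 := (hhold z).2
      rw [h2] at h1
      calc P z w ≤ 1 - P z z := h1
        _ ≤ 2 * e2 * p := h3
    by_cases hxy : x = y
    · -- diagonal case
      subst hxy
      have hq1 : p / 2 ≤ 1 - P x x := (hhold x).1
      have hq2 : 1 - P x x ≤ 2 * e2 * p := (hhold x).2
      have hq0 : 0 ≤ 1 - P x x := by linarith
      set q : ℝ := 1 - P x x with hqdef
      set b : ℝ := 2 * e2 * p with hbdef
      have hbpos : 0 < b := by positivity
      have hub := J_diag_upper hP hrow hbpos hs (fun z w h => hbz z w h) x hq0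
      have hqb : (0:ℝ) < q + b := by linarith
      -- e^{-(q+b)s} ≤ e^{-1/2}
      have hqs : (1:ℝ)/2 ≤ (q + b) * s := by
        rw [hsdef, mul_one_div, le_div_iff₀ hp]
        nlinarith [hbpos, hq1, hp]
      have hE : Real.exp (-((q + b) * s)) ≤ Real.exp (-(1/2 : ℝ)) :=
        Real.exp_le_exp.2 (by linarith)
      -- q/(q+b) ≥ 1/(1+4e2)
      have hr : 1 / (1 + 4 * e2) ≤ q / (q + b) := by
        rw [div_le_div_iff₀ (by positivity) hqb]
        nlinarith [hq1, hp]
      have hcsum : b / (q + b) = 1 - q / (q + b) := by field_simp; ring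
      have hEpos : 0 ≤ Real.exp (-((q + b) * s)) := Real.exp_nonneg _
      have hr1 : q / (q + b) ≤ 1 := by
        rw [div_le_one hqb]; linarith
      have hmin2 : min (Real.exp (-(2 * e2))) ((1 - Real.exp (-(1/2 : ℝ))) / (1 + 4 * e2))
          ≤ (1 - Real.exp (-(1/2 : ℝ))) / (1 + 4 * e2) := min_le_right _ _
      refine le_trans hub ?_
      rw [hcsum]
      have hkey : (1 - Real.exp (-(1/2 : ℝ))) / (1 + 4 * e2)
          ≤ (q / (q + b)) * (1 - Real.exp (-((q + b) * s))) := by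
        have hEE : 1 - Real.exp (-(1/2:ℝ)) ≤ 1 - Real.exp (-((q + b) * s)) := by linarith
        have h0 : (0:ℝ) ≤ 1 - Real.exp (-(1/2:ℝ)) := by linarith
        have hrnn : (0:ℝ) ≤ q / (q + b) := by positivity
        calc (1 - Real.exp (-(1/2 : ℝ))) / (1 + 4 * e2)
            = (1 / (1 + 4 * e2)) * (1 - Real.exp (-(1/2 : ℝ))) := by ring
          _ ≤ (q / (q + b)) * (1 - Real.exp (-((q + b) * s))) :=
              mul_le_mul hr hEE h0 hrnn
      nlinarith [hmin2, hkey]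
    · -- off-diagonal case
      have hq2 : 1 - P x x ≤ 2 * e2 * p := (hhold x).2
      have hlow := J_diag_lower hP hs.le x
      have hJxx : Real.exp (-(2 * e2)) ≤ NormedSpace.exp (s • (P - 1)) x x := by
        refine le_trans (Real.exp_le_exp.2 ?_) hlow
        have h7 : s * (1 - P x x) ≤ 2 * e2 := by
          rw [hsdef, div_mul_eq_mul_div, div_le_iff₀ hp]
          nlinarith [hq2, hp]
        linarith
      have hsum2 : NormedSpace.exp (s • (P - 1)) x x + NormedSpace.exp (s • (P - 1)) x y
          ≤ 1 := by
        have h1 : ∑ z ∈ ({x, y} : Finset V), NormedSpace.exp (s • (P - 1)) x z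
            ≤ ∑ z, NormedSpace.exp (s • (P - 1)) x z := by
          refine Finset.sum_le_sum_of_subset_of_nonneg (Finset.subset_univ _) ?_
          intro z _ _
          exact J_nonneg hP hs.le x z
        rw [Finset.sum_pair hxy, J_rowsum hrow] at h1
        exact h1
      have hmin1 : min (Real.exp (-(2 * e2))) ((1 - Real.exp (-(1/2 : ℝ))) / (1 + 4 * e2))
          ≤ Real.exp (-(2 * e2)) := min_le_left _ _
      have : NormedSpace.exp ((1/p) • (P - 1)) x y ≤ 1 - Real.exp (-(2 * e2)) := by
        rw [← hsdef] at *
        linarith [hJxx, hsum2]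
      linarith

end
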